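/- For all n, m ≥ 1, the identity mapping from ℝⁿ × ℝᵐ with the product (Euclidean) topology to ℝⁿ × ℝᵐ with the cross-topology is not the pointwise limit of any sequence of continuous mappings from ℝⁿ × ℝᵐ (Euclidean) to (ℝⁿ × ℝᵐ, γ). -/

import Mathlib

open Set Filter Topology

def crossOpen {X Y : Type*} [TopologicalSpace X] [TopologicalSpace Y] (A : Set (X × Y)) : Prop :=
  ∀ p ∈ A, ∃ U ∈ nhds p.1, ∃ V ∈ nhds p.2, ({p.1} ×ˢ V) ∪ (U ×ˢ {p.2}) ⊆ A

def crossTopology (X Y : Type*) [TopologicalSpace X] [TopologicalSpace Y] :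
    TopologicalSpace (X × Y) where
  IsOpen := crossOpen
  isOpen_univ := fun p _ => ⟨Set.univ, Filter.univ_mem, Set.univ, Filter.univ_mem, Set.subset_univ _⟩
  isOpen_inter := by
    rintro A B hA hB p hp
    obtain ⟨U1, hU1, V1, hV1, h1⟩ := hA p hp.1
    obtain ⟨U2, hU2, V2, hV2, h2⟩ := hB p hp.2
    refine ⟨U1 ∩ U2, Filter.inter_mem hU1 hU2, V1 ∩ V2, Filter.inter_mem hV1 hV2, ?_⟩
    rintro q (hq | hq)
    · exact ⟨h1 (Or.inl ⟨hq.1, hq.2.1⟩), h2 (Or.inl ⟨hq.1, hq.2.2⟩)⟩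
    · exact ⟨h1 (Or.inr ⟨hq.1.1, hq.2⟩), h2 (Or.inr ⟨hq.1.2, hq.2⟩)⟩
  isOpen_sUnion := by
    rintro S hS p hp
    obtain ⟨A, hAS, hpA⟩ := hp
    obtain ⟨U, hU, V, hV, h⟩ := hS A hAS p hpA
    exact ⟨U, hU, V, hV, h.trans (Set.subset_sUnion_of_mem hAS)⟩

def crossSet {X Y : Type*} (E : Set (X × Y)) : Set (X × Y) :=
  {q | ∃ p ∈ E, q.1 = p.1 ∨ q.2 = p.2}

section Aux

variable {X Y : Type*} [MetricSpace X] [MetricSpace Y]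

lemma crossOpen_of_isOpen {A : Set (X × Y)} (h : IsOpen A) : crossOpen A := by
  intro p hp
  have h2 := h.mem_nhds hp
  rw [mem_nhds_prod_iff] at h2
  obtain ⟨U, hU, V, hV, hUV⟩ := h2
  refine ⟨U, hU, V, hV, ?_⟩
  rintro q (⟨hq1, hq2⟩ | ⟨hq1, hq2⟩)
  · exact hUV ⟨by rw [show q.1 = p.1 from hq1]; exact mem_of_mem_nhds hU, hq2⟩
  · exact hUV ⟨hq1, by rw [show q.2 = p.2 from hq2]; exact mem_of_mem_nhds hV⟩

lemma crossTopology_le :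
    crossTopology X Y ≤ instTopologicalSpaceProd := by
  intro A hA
  exact crossOpen_of_isOpen hA

lemma eventually_cross {u : ℕ → X × Y} {w : X × Y}
    (h : Tendsto u atTop (@nhds _ (crossTopology X Y) w)) :
    ∀ᶠ k in atTop, (u k).1 = w.1 ∨ (u k).2 = w.2 := by
  by_contra hc
  rw [Filter.not_eventually] at hc
  obtain ⟨ψ, hψmono, hψ⟩ := Filter.extraction_of_frequently_atTop hc
  have hE : Tendsto u atTop (nhds w) := h.mono_right (nhds_mono crossTopology_le)
  have hv : Tendsto (u ∘ ψ) atTop (nhds w) := hE.comp hψmono.tendsto_atTop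
  have hclosed : IsClosed (insert w (Set.range (u ∘ ψ))) := hv.isCompact_insert_range.isClosed
  set T := Set.range (u ∘ ψ) with hTdef
  have hTw : closure T ⊆ insert w T := closure_minimal (subset_insert _ _) hclosed
  set S : Set (X × Y) := (closure T)ᶜ ∪ {w} with hSdef
  have hToff : ∀ v ∈ T, v.1 ≠ w.1 ∧ v.2 ≠ w.2 := by
    rintro v ⟨i, rfl⟩
    have := hψ i
    push_neg at this
    exact this
  have hSopen : crossOpen S := by
    rintro p hp
    rcases hp with hp | hp
    · obtain ⟨ε, hε, hball⟩ := Metric.isOpen_iff.mp (isClosed_closure.isOpen_compl) p hp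
      refine ⟨Metric.ball p.1 ε, Metric.ball_mem_nhds _ hε, Metric.ball p.2 ε,
        Metric.ball_mem_nhds _ hε, ?_⟩
      rintro q (⟨hq1, hq2⟩ | ⟨hq1, hq2⟩)
      · refine Or.inl (hball ?_)
        rw [← ball_prod_same]
        exact ⟨by rw [show q.1 = p.1 from hq1]; exact Metric.mem_ball_self hε, hq2⟩
      · refine Or.inl (hball ?_)
        rw [← ball_prod_same]
        exact ⟨hq1, by rw [show q.2 = p.2 from hq2]; exact Metric.mem_ball_self hε⟩
    · have hp' : p = w := hp
      subst hp'
      refine ⟨Set.univ, Filter.univ_mem, Set.univ, Filter.univ_mem, ?_⟩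
      rintro q (⟨hq1, -⟩ | ⟨-, hq2⟩)
      · by_cases hq : q ∈ closure T
        · rcases hTw hq with hq' | hq'
          · exact Or.inr hq'
          · exact absurd (show q.1 = p.1 from hq1) (hToff q hq').1
        · exact Or.inl hq
      · by_cases hq : q ∈ closure T
        · rcases hTw hq with hq' | hq'
          · exact Or.inr hq'
          · exact absurd (show q.2 = p.2 from hq2) (hToff q hq').2
        · exact Or.inl hq
  have hS : S ∈ @nhds _ (crossTopology X Y) w := by
    have : IsOpen[crossTopology X Y] S := hSopen
    exact @IsOpen.mem_nhds (X × Y) (crossTopology X Y) w S this (Or.inr rfl)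
  have hev : ∀ᶠ k in atTop, u k ∈ S := h hS
  obtain ⟨N, hN⟩ := eventually_atTop.mp hev
  have huN : u (ψ N) ∈ S := hN (ψ N) (hψmono.le_apply)
  have hmem : u (ψ N) ∈ T := ⟨N, rfl⟩
  rcases huN with h' | h'
  · exact h' (subset_closure hmem)
  · have : u (ψ N) = w := h'
    exact (hToff _ hmem).1 (by rw [this])

lemma exists_ball_cross {g : X × Y → X × Y}
    (hg : Continuous[instTopologicalSpaceProd, crossTopology X Y] g) (x : X × Y) :
    ∃ ε > 0, ∀ x', dist x' x < ε → ((g x').1 = (g x).1 ∨ (g x').2 = (g x).2) := by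
  by_contra hc
  push_neg at hc
  choose xs hxs hxs' using fun i : ℕ => hc (1 / (i + 1)) (by positivity)
  have hx : Tendsto xs atTop (nhds x) := by
    rw [tendsto_iff_dist_tendsto_zero]
    refine squeeze_zero (fun i => dist_nonneg) (fun i => (hxs i).le) ?_
    exact tendsto_one_div_add_atTop_nhds_zero_nat
  have hgx : Tendsto (fun i => g (xs i)) atTop (@nhds _ (crossTopology X Y) (g x)) :=
    (@Continuous.tendsto _ _ instTopologicalSpaceProd (crossTopology X Y) g hg x).comp hx
  obtain ⟨N, hN⟩ := eventually_atTop.mp (eventually_cross hgx)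
  rcases hN N le_rfl with h | h
  · exact (hxs' N).1 h
  · exact (hxs' N).2 h

lemma continuous_of_crossContinuous {g : X × Y → X × Y}
    (hg : Continuous[instTopologicalSpaceProd, crossTopology X Y] g) :
    Continuous g := by
  have hid : Continuous[crossTopology X Y, instTopologicalSpaceProd]
      (id : X × Y → X × Y) := continuous_id_iff_le.mpr crossTopology_le
  exact @Continuous.comp _ _ _ instTopologicalSpaceProd (crossTopology X Y) instTopologicalSpaceProd g id hid hg

end Aux


section OneD

variable {X Y : Type*} [MetricSpace X] [MetricSpace Y]
variable {φ : ℝ → X × Y} {σ₁ : ℝ → X} {σ₂ : ℝ → Y}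

lemma bridge (hφ : Continuous φ) (hσ₁ : Continuous σ₁) (hσ₂ : Continuous σ₂)
    (hinj₁ : Function.Injective σ₁) (hinj₂ : Function.Injective σ₂)
    (H1 : ∀ t ∈ Icc (0:ℝ) 1, (φ t).1 = σ₁ t ∨ (φ t).2 = σ₂ t)
    (H2 : ∀ t ∈ Icc (0:ℝ) 1, ∃ δ > 0, ∀ t' ∈ Icc (0:ℝ) 1, |t' - t| < δ →
      ((φ t').1 = (φ t).1 ∨ (φ t').2 = (φ t).2))
    {a b : ℝ} (ha : a ∈ Icc (0:ℝ) 1) (hb : b ∈ Icc (0:ℝ) 1) (hab : a < b)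
    (hZ : ∀ t ∈ Ioo a b, ¬((φ t).1 = σ₁ t ∧ (φ t).2 = σ₂ t)) :
    (φ a).1 = (φ b).1 ∨ (φ a).2 = (φ b).2 := by
  -- make the H2 choice total
  have H2' : ∀ t : ℝ, ∃ δ > 0, ∀ t' ∈ Icc (0:ℝ) 1, t ∈ Icc (0:ℝ) 1 → |t' - t| < δ →
      ((φ t').1 = (φ t).1 ∨ (φ t').2 = (φ t).2) := by
    intro t
    by_cases ht : t ∈ Icc (0:ℝ) 1
    · obtain ⟨δ, hδ, hδ'⟩ := H2 t ht
      exact ⟨δ, hδ, fun t' ht' _ h => hδ' t' ht' h⟩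
    · exact ⟨1, one_pos, fun t' _ ht _ => absurd ht ‹_›⟩
  choose δf hδf hδ using H2'
  have hsub : Ioo a b ⊆ Icc (0:ℝ) 1 := fun t ht => ⟨le_trans ha.1 ht.1.le, le_trans ht.2.le hb.2⟩
  have hmid : (a + b) / 2 ∈ Ioo a b := ⟨by linarith, by linarith⟩
  -- track lemma
  have htrack : (∀ t ∈ Ioo a b, (φ t).1 = σ₁ t) ∨ (∀ t ∈ Ioo a b, (φ t).2 = σ₂ t) := by
    by_contra hcon
    push_neg at hcon
    obtain ⟨⟨t1, ht1, h1⟩, ⟨t2, ht2, h2⟩⟩ := hcon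
    have hu : IsOpen {t : ℝ | (φ t).1 ≠ σ₁ t} :=
      (isClosed_eq (hφ.fst) hσ₁).isOpen_compl
    have hv : IsOpen {t : ℝ | (φ t).2 ≠ σ₂ t} :=
      (isClosed_eq (hφ.snd) hσ₂).isOpen_compl
    have hcover : Ioo a b ⊆ {t : ℝ | (φ t).1 ≠ σ₁ t} ∪ {t : ℝ | (φ t).2 ≠ σ₂ t} := by
      intro t ht
      by_contra h'
      simp only [mem_union, mem_setOf_eq, not_or, not_not] at h'
      exact hZ t ht ⟨h'.1, h'.2⟩
    obtain ⟨x, hx, hxu, hxv⟩ := isPreconnected_Ioo _ _ hu hv hcover ⟨t1, ht1, h1⟩ ⟨t2, ht2, h2⟩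
    rcases H1 x (hsub hx) with h | h
    · exact hxu h
    · exact hxv h
  rcases htrack with htr | htr
  · -- tracks first coordinate; then second coordinate of φ is constant on Ioo a b
    right
    set c := (φ ((a + b) / 2)).2 with hc
    have hconst : ∀ t ∈ Ioo a b, (φ t).2 = c := by
      by_contra hcon
      push_neg at hcon
      obtain ⟨t2, ht2, hne⟩ := hcon
      set u : Set ℝ := ⋃ (t : ℝ) (_ : t ∈ Ioo a b ∧ (φ t).2 = c), Metric.ball t (δf t)
      have hu : IsOpen u := isOpen_biUnion fun _ _ => Metric.isOpen_ball
      have hv : IsOpen {t : ℝ | (φ t).2 ≠ c} :=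
        (isClosed_eq (hφ.snd) continuous_const).isOpen_compl
      have hcover : Ioo a b ⊆ u ∪ {t : ℝ | (φ t).2 ≠ c} := by
        intro t ht
        by_cases h' : (φ t).2 = c
        · exact Or.inl (mem_biUnion ⟨ht, h'⟩ (Metric.mem_ball_self (hδf t)))
        · exact Or.inr h'
      have hne1 : (Ioo a b ∩ u).Nonempty :=
        ⟨(a + b) / 2, hmid, mem_biUnion ⟨hmid, rfl⟩ (Metric.mem_ball_self (hδf _))⟩
      obtain ⟨x, hx, hxu, hxv⟩ := isPreconnected_Ioo _ _ hu hv hcover hne1 ⟨t2, ht2, hne⟩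
      obtain ⟨t, ht, hxt⟩ := mem_iUnion₂.mp hxu
      have hrel := hδ t x (hsub hx) (hsub ht.1)
        (by rw [← Real.dist_eq]; exact Metric.mem_ball.mp hxt)
      rcases hrel with h | h
      · have hx1 : (φ x).1 = σ₁ x := htr x hx
        have ht1 : (φ t).1 = σ₁ t := htr t ht.1
        rw [hx1, ht1] at h
        have : x = t := hinj₁ h
        exact hxv (by rw [this]; exact ht.2)
      · exact hxv (h.trans ht.2)
    have hcc : Icc a b ⊆ {t : ℝ | (φ t).2 = c} := by
      rw [← closure_Ioo hab.ne]
      exact closure_minimal hconst (isClosed_eq (hφ.snd) continuous_const)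
    have hac : (φ a).2 = c := hcc ⟨le_refl a, hab.le⟩
    have hbc : (φ b).2 = c := hcc ⟨hab.le, le_refl b⟩
    rw [hac, hbc]
  · -- tracks second coordinate; first coordinate constant
    left
    set c := (φ ((a + b) / 2)).1 with hc
    have hconst : ∀ t ∈ Ioo a b, (φ t).1 = c := by
      by_contra hcon
      push_neg at hcon
      obtain ⟨t2, ht2, hne⟩ := hcon
      set u : Set ℝ := ⋃ (t : ℝ) (_ : t ∈ Ioo a b ∧ (φ t).1 = c), Metric.ball t (δf t)
      have hu : IsOpen u := isOpen_biUnion fun _ _ => Metric.isOpen_ball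
      have hv : IsOpen {t : ℝ | (φ t).1 ≠ c} :=
        (isClosed_eq (hφ.fst) continuous_const).isOpen_compl
      have hcover : Ioo a b ⊆ u ∪ {t : ℝ | (φ t).1 ≠ c} := by
        intro t ht
        by_cases h' : (φ t).1 = c
        · exact Or.inl (mem_biUnion ⟨ht, h'⟩ (Metric.mem_ball_self (hδf t)))
        · exact Or.inr h'
      have hne1 : (Ioo a b ∩ u).Nonempty :=
        ⟨(a + b) / 2, hmid, mem_biUnion ⟨hmid, rfl⟩ (Metric.mem_ball_self (hδf _))⟩
      obtain ⟨x, hx, hxu, hxv⟩ := isPreconnected_Ioo _ _ hu hv hcover hne1 ⟨t2, ht2, hne⟩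
      obtain ⟨t, ht, hxt⟩ := mem_iUnion₂.mp hxu
      have hrel := hδ t x (hsub hx) (hsub ht.1)
        (by rw [← Real.dist_eq]; exact Metric.mem_ball.mp hxt)
      rcases hrel with h | h
      · exact hxv (h.trans ht.2)
      · have hx2 : (φ x).2 = σ₂ x := htr x hx
        have ht2' : (φ t).2 = σ₂ t := htr t ht.1
        rw [hx2, ht2'] at h
        have : x = t := hinj₂ h
        exact hxv (by rw [this]; exact ht.2)
    have hcc : Icc a b ⊆ {t : ℝ | (φ t).1 = c} := by
      rw [← closure_Ioo hab.ne]
      exact closure_minimal hconst (isClosed_eq (hφ.fst) continuous_const)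
    have hac : (φ a).1 = c := hcc ⟨le_refl a, hab.le⟩
    have hbc : (φ b).1 = c := hcc ⟨hab.le, le_refl b⟩
    rw [hac, hbc]

end OneD

section OneD
variable {X Y : Type*} [MetricSpace X] [MetricSpace Y]
variable {φ : ℝ → X × Y} {σ₁ : ℝ → X} {σ₂ : ℝ → Y}

lemma oneD (hφ : Continuous φ) (hσ₁ : Continuous σ₁) (hσ₂ : Continuous σ₂)
    (hinj₁ : Function.Injective σ₁) (hinj₂ : Function.Injective σ₂)
    (H1 : ∀ t ∈ Icc (0:ℝ) 1, (φ t).1 = σ₁ t ∨ (φ t).2 = σ₂ t)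
    (H2 : ∀ t ∈ Icc (0:ℝ) 1, ∃ δ > 0, ∀ t' ∈ Icc (0:ℝ) 1, |t' - t| < δ →
      ((φ t').1 = (φ t).1 ∨ (φ t').2 = (φ t).2)) :
    (∃ z ∈ Icc (0:ℝ) 1, ((φ 0).1 = σ₁ z ∨ (φ 0).2 = σ₂ z) ∧
      ((φ 1).1 = σ₁ z ∨ (φ 1).2 = σ₂ z)) ∨
    (φ 1).1 = (φ 0).1 ∨ (φ 1).2 = (φ 0).2 := by
  have h01 : (0:ℝ) ∈ Icc (0:ℝ) 1 := ⟨le_refl 0, zero_le_one⟩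
  have h11 : (1:ℝ) ∈ Icc (0:ℝ) 1 := ⟨zero_le_one, le_refl 1⟩
  set Z : Set ℝ := Icc (0:ℝ) 1 ∩ ({t | (φ t).1 = σ₁ t} ∩ {t | (φ t).2 = σ₂ t}) with hZdef
  by_cases hZe : Z = ∅
  · right
    have hb := bridge hφ hσ₁ hσ₂ hinj₁ hinj₂ H1 H2 h01 h11 one_pos (fun t ht hc => by
      have : t ∈ Z := ⟨⟨ht.1.le, ht.2.le⟩, hc.1, hc.2⟩
      rw [hZe] at this; exact this)
    rcases hb with h | h
    · exact Or.inl h.symm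
    · exact Or.inr h.symm
  · left
    have hZne : Z.Nonempty := nonempty_iff_ne_empty.mpr hZe
    have hZclosed : IsClosed Z :=
      (isClosed_Icc.inter ((isClosed_eq hφ.fst hσ₁).inter (isClosed_eq hφ.snd hσ₂)))
    have hZbdd : BddBelow Z := ⟨0, fun t ht => ht.1.1⟩
    set z := sInf Z with hz
    have hzZ : z ∈ Z := hZclosed.csInf_mem hZne hZbdd
    have hzIcc : z ∈ Icc (0:ℝ) 1 := hzZ.1
    have hz1 : (φ z).1 = σ₁ z := hzZ.2.1
    have hz2 : (φ z).2 = σ₂ z := hzZ.2.2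
    -- discreteness at z
    obtain ⟨δ, hδpos, hδ⟩ := H2 z hzIcc
    have hdisc : ∀ t ∈ Z, |t - z| < δ → t = z := by
      intro t ht htδ
      rcases hδ t ht.1 htδ with h | h
      · rw [ht.2.1, hz1] at h; exact hinj₁ h
      · rw [ht.2.2, hz2] at h; exact hinj₂ h
    -- uniqueness: every element of Z equals z
    have huniq : ∀ t ∈ Z, t = z := by
      intro t ht
      by_contra hne
      have hgt : z < t := lt_of_le_of_ne (csInf_le hZbdd ht) (Ne.symm hne)
      have hge : ∀ s ∈ Z, z < s → z + δ ≤ s := by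
        intro s hs hzs
        by_contra h'
        push_neg at h'
        have : |s - z| < δ := abs_lt.mpr ⟨by linarith, by linarith⟩
        exact absurd (hdisc s hs this) (ne_of_gt hzs)
      set Z₂ := Z ∩ Ici (z + δ) with hZ₂def
      have hZ₂ne : Z₂.Nonempty := ⟨t, ht, hge t ht hgt⟩
      have hZ₂closed : IsClosed Z₂ := hZclosed.inter isClosed_Ici
      have hZ₂bdd : BddBelow Z₂ := hZbdd.inter_of_left
      set z₂ := sInf Z₂ with hz₂
      have hz₂Z₂ : z₂ ∈ Z₂ := hZ₂closed.csInf_mem hZ₂ne hZ₂bdd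
      have hzz₂ : z < z₂ := lt_of_lt_of_le (by linarith) hz₂Z₂.2
      have hIoo : ∀ s ∈ Ioo z z₂, ¬((φ s).1 = σ₁ s ∧ (φ s).2 = σ₂ s) := by
        intro s hs hc
        have hsZ : s ∈ Z := ⟨⟨le_trans hzIcc.1 hs.1.le,
          le_trans hs.2.le hz₂Z₂.1.1.2⟩, hc.1, hc.2⟩
        have : z + δ ≤ s := hge s hsZ hs.1
        have : z₂ ≤ s := csInf_le hZ₂bdd ⟨hsZ, this⟩
        exact absurd hs.2 (not_lt.mpr this)
      have hbr := bridge hφ hσ₁ hσ₂ hinj₁ hinj₂ H1 H2 hzIcc hz₂Z₂.1.1 hzz₂ hIoo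
      rcases hbr with h | h
      · rw [hz1, hz₂Z₂.1.2.1] at h
        exact absurd (hinj₁ h) (ne_of_lt hzz₂)
      · rw [hz2, hz₂Z₂.1.2.2] at h
        exact absurd (hinj₂ h) (ne_of_lt hzz₂)
    refine ⟨z, hzIcc, ?_, ?_⟩
    · rcases eq_or_lt_of_le hzIcc.1 with h0 | h0
      · exact Or.inl (by rw [← h0] at hz1 ⊢; exact hz1)
      · have hIoo : ∀ s ∈ Ioo (0:ℝ) z, ¬((φ s).1 = σ₁ s ∧ (φ s).2 = σ₂ s) := by
          intro s hs hc
          have hsZ : s ∈ Z := ⟨⟨hs.1.le, le_trans hs.2.le hzIcc.2⟩, hc.1, hc.2⟩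
          exact absurd (huniq s hsZ) (ne_of_lt hs.2)
        rcases bridge hφ hσ₁ hσ₂ hinj₁ hinj₂ H1 H2 h01 hzIcc h0 hIoo with h | h
        · exact Or.inl (h.trans hz1)
        · exact Or.inr (h.trans hz2)
    · rcases eq_or_lt_of_le hzIcc.2 with h1 | h1
      · exact Or.inl (by rw [h1] at hz1 ⊢; exact hz1)
      · have hIoo : ∀ s ∈ Ioo z 1, ¬((φ s).1 = σ₁ s ∧ (φ s).2 = σ₂ s) := by
          intro s hs hc
          have hsZ : s ∈ Z := ⟨⟨le_trans hzIcc.1 hs.1.le, hs.2.le⟩, hc.1, hc.2⟩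
          exact absurd (huniq s hsZ) (ne_of_gt hs.1)
        rcases bridge hφ hσ₁ hσ₂ hinj₁ hinj₂ H1 H2 hzIcc h11 h1 hIoo with h | h
        · exact Or.inl (h.symm.trans hz1)
        · exact Or.inr (h.symm.trans hz2)

end OneD

theorem identity_not_baire_one_euclidean (n m : ℕ) (hn : 1 ≤ n) (hm : 1 ≤ m) :
    ¬ ∃ f : ℕ → (Fin n → ℝ) × (Fin m → ℝ) → (Fin n → ℝ) × (Fin m → ℝ),
      (∀ k, Continuous[instTopologicalSpaceProd,
        crossTopology (Fin n → ℝ) (Fin m → ℝ)] (f k)) ∧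
      ∀ p : (Fin n → ℝ) × (Fin m → ℝ),
        Filter.Tendsto (fun k => f k p) Filter.atTop
          (@nhds ((Fin n → ℝ) × (Fin m → ℝ))
            (crossTopology (Fin n → ℝ) (Fin m → ℝ)) p) := by
  rintro ⟨f, hfc, hfl⟩
  haveI hn' : Nonempty (Fin n) := ⟨⟨0, hn⟩⟩
  haveI hm' : Nonempty (Fin m) := ⟨⟨0, hm⟩⟩
  have hfE : ∀ k, Continuous (f k) := fun k => continuous_of_crossContinuous (hfc k)
  have hflE : ∀ p : (Fin n → ℝ) × (Fin m → ℝ), Tendsto (fun k => f k p) atTop (nhds p) :=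
    fun p => (hfl p).mono_right (nhds_mono crossTopology_le)
  -- Baire category argument
  set A : ℕ → Set ((Fin n → ℝ) × (Fin m → ℝ)) := fun K => ⋂ j, {p | K ≤ j → ((f j p).1 = p.1 ∨ (f j p).2 = p.2)} with hAdef
  have hAclosed : ∀ K, IsClosed (A K) := by
    intro K
    refine isClosed_iInter fun j => ?_
    by_cases h : K ≤ j
    · have : {p : (Fin n → ℝ) × (Fin m → ℝ) | K ≤ j → ((f j p).1 = p.1 ∨ (f j p).2 = p.2)}
          = {p : (Fin n → ℝ) × (Fin m → ℝ) | (f j p).1 = p.1} ∪ {p : (Fin n → ℝ) × (Fin m → ℝ) | (f j p).2 = p.2} := by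
        ext p; simp [h, setOf_or]
      rw [this]
      exact (isClosed_eq (hfE j).fst continuous_fst).union
        (isClosed_eq (hfE j).snd continuous_snd)
    · have : {p : (Fin n → ℝ) × (Fin m → ℝ) | K ≤ j → ((f j p).1 = p.1 ∨ (f j p).2 = p.2)} = univ := by
        ext p; simp [h]
      rw [this]; exact isClosed_univ
  have hAcover : (⋃ K, A K) = univ := by
    refine eq_univ_of_forall fun p => ?_
    obtain ⟨K, hK⟩ := eventually_atTop.mp (eventually_cross (hfl p))
    exact mem_iUnion.mpr ⟨K, mem_iInter.mpr fun j hKj => hK j hKj⟩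
  obtain ⟨K, x, hx⟩ := nonempty_interior_of_iUnion_of_closed hAclosed hAcover
  obtain ⟨r, hr, hball⟩ := Metric.mem_nhds_iff.mp (mem_interior_iff_mem_nhds.mp hx)
  -- the segment
  set d1 : Fin n → ℝ := fun _ => r / 2 with hd1
  set d2 : Fin m → ℝ := fun _ => r / 2 with hd2
  set σ₁ : ℝ → (Fin n → ℝ) := fun t => x.1 + t • d1 with hσ₁def
  set σ₂ : ℝ → (Fin m → ℝ) := fun t => x.2 + t • d2 with hσ₂def
  set s : ℝ → (Fin n → ℝ) × (Fin m → ℝ) := fun t => (σ₁ t, σ₂ t) with hsdef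
  have hdist1 : ∀ t t' : ℝ, dist (σ₁ t) (σ₁ t') = |t - t'| * (r / 2) := by
    intro t t'
    have h1 : σ₁ t = x.1 + (fun _ : Fin n => t * (r / 2)) := by
      funext i; simp [hσ₁def, hd1, smul_eq_mul]
    have h2 : σ₁ t' = x.1 + (fun _ : Fin n => t' * (r / 2)) := by
      funext i; simp [hσ₁def, hd1, smul_eq_mul]
    rw [h1, h2, dist_add_left, dist_pi_const, Real.dist_eq, ← sub_mul, abs_mul,
      abs_of_pos (by linarith : (0:ℝ) < r / 2)]
  have hdist2 : ∀ t t' : ℝ, dist (σ₂ t) (σ₂ t') = |t - t'| * (r / 2) := by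
    intro t t'
    have h1 : σ₂ t = x.2 + (fun _ : Fin m => t * (r / 2)) := by
      funext i; simp [hσ₂def, hd2, smul_eq_mul]
    have h2 : σ₂ t' = x.2 + (fun _ : Fin m => t' * (r / 2)) := by
      funext i; simp [hσ₂def, hd2, smul_eq_mul]
    rw [h1, h2, dist_add_left, dist_pi_const, Real.dist_eq, ← sub_mul, abs_mul,
      abs_of_pos (by linarith : (0:ℝ) < r / 2)]
  have hdists : ∀ t t' : ℝ, dist (s t) (s t') = |t - t'| * (r / 2) := by
    intro t t'
    rw [Prod.dist_eq]
    simp only [hsdef]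
    rw [hdist1, hdist2, max_self]
  have hinj1 : Function.Injective σ₁ := by
    intro t t' h
    have := hdist1 t t'
    rw [h, dist_self] at this
    have h2 : |t - t'| = 0 := by
      rcases mul_eq_zero.mp this.symm with h' | h'
      · exact h'
      · linarith
    have := abs_eq_zero.mp h2
    linarith [this]
  have hinj2 : Function.Injective σ₂ := by
    intro t t' h
    have := hdist2 t t'
    rw [h, dist_self] at this
    have h2 : |t - t'| = 0 := by
      rcases mul_eq_zero.mp this.symm with h' | h'
      · exact h'
      · linarith
    have := abs_eq_zero.mp h2
    linarith [this]
  have hσ₁cont : Continuous σ₁ := continuous_const.add (continuous_id.smul continuous_const)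
  have hσ₂cont : Continuous σ₂ := continuous_const.add (continuous_id.smul continuous_const)
  have hscont : Continuous s := hσ₁cont.prodMk hσ₂cont
  have hs0 : s 0 = x := by
    simp only [hsdef, hσ₁def, hσ₂def, zero_smul, add_zero]
  have hsball : ∀ t ∈ Icc (0:ℝ) 1, s t ∈ Metric.ball x r := by
    intro t ht
    rw [Metric.mem_ball, ← hs0, hdists]
    have : |t - 0| = t := by rw [sub_zero, abs_of_nonneg ht.1]
    rw [this]
    nlinarith [ht.2, hr]
  have hsA : ∀ t ∈ Icc (0:ℝ) 1, ∀ j, K ≤ j →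
      ((f j (s t)).1 = σ₁ t ∨ (f j (s t)).2 = σ₂ t) := by
    intro t ht j hj
    have := hball (hsball t ht)
    rw [hAdef] at this
    exact mem_iInter.mp this j hj
  -- choose j
  obtain ⟨N1, hN1⟩ := (Metric.tendsto_atTop.mp (hflE x)) (r / 8) (by linarith)
  obtain ⟨N2, hN2⟩ := (Metric.tendsto_atTop.mp (hflE (s 1))) (r / 8) (by linarith)
  set j := max (max N1 N2) K with hj
  have hjK : K ≤ j := le_max_right _ _
  have hj0 : dist (f j x) x < r / 8 := hN1 j (le_trans (le_max_left _ _) (le_max_left _ _))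
  have hj1 : dist (f j (s 1)) (s 1) < r / 8 := hN2 j (le_trans (le_max_right _ _) (le_max_left _ _))
  -- apply oneD
  set φ : ℝ → (Fin n → ℝ) × (Fin m → ℝ) := fun t => f j (s t) with hφdef
  have hφcont : Continuous φ := (hfE j).comp hscont
  have H1 : ∀ t ∈ Icc (0:ℝ) 1, (φ t).1 = σ₁ t ∨ (φ t).2 = σ₂ t :=
    fun t ht => hsA t ht j hjK
  have H2 : ∀ t ∈ Icc (0:ℝ) 1, ∃ δ > 0, ∀ t' ∈ Icc (0:ℝ) 1, |t' - t| < δ →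
      ((φ t').1 = (φ t).1 ∨ (φ t').2 = (φ t).2) := by
    intro t _
    obtain ⟨ε, hε, hb⟩ := exists_ball_cross (hfc j) (s t)
    refine ⟨ε / r, by positivity, fun t' _ ht' => ?_⟩
    refine hb (s t') ?_
    rw [hdists]
    calc |t' - t| * (r / 2) < (ε / r) * (r / 2) := by
          apply mul_lt_mul_of_pos_right ht' (by linarith)
      _ = ε / 2 := by field_simp
      _ < ε := by linarith
  have hfst : ∀ u v : (Fin n → ℝ) × (Fin m → ℝ), dist u.1 v.1 ≤ dist u v := by
    intro u v; rw [Prod.dist_eq]; exact le_max_left _ _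
  have hsnd : ∀ u v : (Fin n → ℝ) × (Fin m → ℝ), dist u.2 v.2 ≤ dist u v := by
    intro u v; rw [Prod.dist_eq]; exact le_max_right _ _
  have hφ0 : φ 0 = f j x := by rw [hφdef]; simp only [hs0]
  have hq1 : (s 1).1 = σ₁ 1 := rfl
  have hq2 : (s 1).2 = σ₂ 1 := rfl
  rcases oneD hφcont hσ₁cont hσ₂cont hinj1 hinj2 H1 H2 with ⟨z, hz, h0, h1⟩ | h | h
  · -- z case
    have hx1 : (s 0).1 = σ₁ 0 := rfl
    have hzlt : z < 1/4 := by
      have hd0 : dist (φ 0) x < r / 8 := by rw [hφ0]; exact hj0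
      rcases h0 with h' | h'
      · have : dist (σ₁ z) (σ₁ 0) < r / 8 := by
          rw [← h']
          calc dist (φ 0).1 (σ₁ 0) = dist (φ 0).1 x.1 := by rw [← hs0, hx1]
            _ ≤ dist (φ 0) x := hfst _ _
            _ < r / 8 := hd0
        rw [hdist1, sub_zero, abs_of_nonneg hz.1] at this
        nlinarith [hr]
      · have : dist (σ₂ z) (σ₂ 0) < r / 8 := by
          rw [← h']
          calc dist (φ 0).2 (σ₂ 0) = dist (φ 0).2 x.2 := by rw [← hs0]
            _ ≤ dist (φ 0) x := hsnd _ _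
            _ < r / 8 := hd0
        rw [hdist2, sub_zero, abs_of_nonneg hz.1] at this
        nlinarith [hr]
    have hzgt : 3/4 < z := by
      rcases h1 with h' | h'
      · have : dist (σ₁ z) (σ₁ 1) < r / 8 := by
          rw [← h']
          calc dist (φ 1).1 (σ₁ 1) = dist (φ 1).1 (s 1).1 := rfl
            _ ≤ dist (φ 1) (s 1) := hfst _ _
            _ < r / 8 := hj1
        rw [hdist1, abs_of_nonpos (by linarith [hz.2] : z - 1 ≤ 0)] at this
        nlinarith [hr]
      · have : dist (σ₂ z) (σ₂ 1) < r / 8 := by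
          rw [← h']
          calc dist (φ 1).2 (σ₂ 1) = dist (φ 1).2 (s 1).2 := rfl
            _ ≤ dist (φ 1) (s 1) := hsnd _ _
            _ < r / 8 := hj1
        rw [hdist2, abs_of_nonpos (by linarith [hz.2] : z - 1 ≤ 0)] at this
        nlinarith [hr]
    linarith
  · -- (φ 1).1 = (φ 0).1
    have hbig : dist x.1 (s 1).1 = r / 2 := by
      rw [← hs0, hq1]
      have : (s 0).1 = σ₁ 0 := rfl
      rw [this, hdist1]
      simp [abs_of_nonpos]
    have hsmall : dist x.1 (s 1).1 < r / 4 := by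
      calc dist x.1 (s 1).1 ≤ dist x.1 (φ 0).1 + dist (φ 0).1 (s 1).1 := dist_triangle _ _ _
        _ = dist x.1 (f j x).1 + dist (φ 1).1 (s 1).1 := by rw [h, hφ0]
        _ ≤ dist x (f j x) + dist (φ 1) (s 1) := add_le_add (hfst _ _) (hfst _ _)
        _ = dist (f j x) x + dist (f j (s 1)) (s 1) := by rw [dist_comm x (f j x)]
        _ < r / 8 + r / 8 := add_lt_add hj0 hj1
        _ = r / 4 := by ring
    rw [hbig] at hsmall
    linarith
  · -- (φ 1).2 = (φ 0).2
    have hbig : dist x.2 (s 1).2 = r / 2 := by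
      rw [← hs0, hq2]
      have : (s 0).2 = σ₂ 0 := rfl
      rw [this, hdist2]
      simp [abs_of_nonpos]
    have hsmall : dist x.2 (s 1).2 < r / 4 := by
      calc dist x.2 (s 1).2 ≤ dist x.2 (φ 0).2 + dist (φ 0).2 (s 1).2 := dist_triangle _ _ _
        _ = dist x.2 (f j x).2 + dist (φ 1).2 (s 1).2 := by rw [h, hφ0]
        _ ≤ dist x (f j x) + dist (φ 1) (s 1) := add_le_add (hsnd _ _) (hsnd _ _)
        _ = dist (f j x) x + dist (f j (s 1)) (s 1) := by rw [dist_comm x (f j x)]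
        _ < r / 8 + r / 8 := add_lt_add hj0 hj1
        _ = r / 4 := by ring
    rw [hbig] at hsmall
    linarith
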